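/- arXiv:1407.7428 — 2 statements merged into one kernel-verified Lean document; each statement's English description precedes it below -/
import Mathlib

section
/- Let A = {a,b,c} and R = {ac → ca, bc → cb, cab → cbb}. Then for every word u over {a,b}, one has c u a b ↔*_R c u b b. Consequently, with R' = {(c u a b, c u b b) : u ∈ {a,b}*}, the Thue congruence ↔*_{R ∪ R'} equals the Thue congruence ↔*_R. -/
/-- The three-letter alphabet `{a, b, c}`. -/
inductive ABC : Type
  | a : ABC
  | b : ABC
  | c : ABC

open ABC

/-- Single-step reduction of a string rewriting system `R`:
`u →_R v` iff `u = xℓy` and `v = xry` for some rule `(ℓ, r) ∈ R`. -/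
def Step {α : Type*} (R : Set (List α × List α)) (u v : List α) : Prop :=
  ∃ x y l r, (l, r) ∈ R ∧ u = x ++ l ++ y ∧ v = x ++ r ++ y

/-- The rules `ac → ca`, `bc → cb`, `cab → cbb` of Example 3.4. -/
def Rp : Set (List ABC × List ABC) :=
  {([a,c], [c,a]), ([b,c], [c,b]), ([c,a,b], [c,b,b])}

/-- The extra rules `cuab → cubb` for `u ∈ {a,b}*`. -/
def Rp' : Set (List ABC × List ABC) :=
  {p | ∃ u : List ABC, c ∉ u ∧ p = (c :: u ++ [a, b], c :: u ++ [b, b])}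

lemma step_ctx {α : Type*} {R : Set (List α × List α)} {u v : List α}
    (p q : List α) (h : Step R u v) : Step R (p ++ u ++ q) (p ++ v ++ q) := by
  obtain ⟨x, y, l, r, hmem, hu, hv⟩ := h
  exact ⟨p ++ x, y ++ q, l, r, hmem, by simp [hu], by simp [hv]⟩

lemma eqv_ctx {α : Type*} {R : Set (List α × List α)} {u v : List α}
    (p q : List α) (h : Relation.EqvGen (Step R) u v) :
    Relation.EqvGen (Step R) (p ++ u ++ q) (p ++ v ++ q) := by
  induction h with
  | rel x y hxy => exact Relation.EqvGen.rel _ _ (step_ctx p q hxy)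
  | refl x => exact Relation.EqvGen.refl _
  | symm x y _ ih => exact ih.symm _ _
  | trans x y z _ _ ih1 ih2 => exact ih1.trans _ _ _ ih2

lemma key : ∀ u : List ABC, c ∉ u →
    Relation.EqvGen (Step Rp) (c :: u ++ [a, b]) (c :: u ++ [b, b]) := by
  intro u
  induction u with
  | nil =>
    intro _
    exact Relation.EqvGen.rel _ _ ⟨[], [], [c,a,b], [c,b,b], by simp [Rp], rfl, rfl⟩
  | cons d u ih =>
    intro hc
    have hd : d = a ∨ d = b := by
      cases d with
      | a => exact Or.inl rfl
      | b => exact Or.inr rfl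
      | c => simp at hc
    have ih' := ih (fun h => hc (List.mem_cons_of_mem _ h))
    have hmid : Relation.EqvGen (Step Rp)
        (d :: c :: u ++ [a, b]) (d :: c :: u ++ [b, b]) := by
      have := eqv_ctx [d] ([] : List ABC) ih'
      simpa using this
    have hdc : ([d, c], [c, d]) ∈ Rp := by
      rcases hd with h | h <;> subst h <;> simp [Rp]
    have h1 : Step Rp (d :: c :: u ++ [a, b]) (c :: d :: u ++ [a, b]) :=
      ⟨[], u ++ [a, b], [d, c], [c, d], hdc, by simp, by simp⟩
    have h2 : Step Rp (d :: c :: u ++ [b, b]) (c :: d :: u ++ [b, b]) :=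
      ⟨[], u ++ [b, b], [d, c], [c, d], hdc, by simp, by simp⟩
    exact ((Relation.EqvGen.rel _ _ h1).symm _ _).trans _ _ _
      (hmid.trans _ _ _ (Relation.EqvGen.rel _ _ h2))

/-- For every word `u` over `{a,b}` one has `cuab ↔*_R cubb`; consequently
the Thue congruence of `R ∪ R'` equals that of `R`. -/
theorem stmt_7 :
    (∀ u : List ABC, c ∉ u →
      Relation.EqvGen (Step Rp) (c :: u ++ [a, b]) (c :: u ++ [b, b])) ∧
    (∀ v w : List ABC,
      Relation.EqvGen (Step (Rp ∪ Rp')) v w ↔ Relation.EqvGen (Step Rp) v w) := by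
  refine ⟨key, fun v w => ⟨?_, ?_⟩⟩
  · intro h
    induction h with
    | rel x y hxy =>
      obtain ⟨p, q, l, r, hmem, hx, hy⟩ := hxy
      rcases hmem with hmem | hmem
      · exact Relation.EqvGen.rel _ _ ⟨p, q, l, r, hmem, hx, hy⟩
      · obtain ⟨u, hcu, heq⟩ := hmem
        obtain ⟨hl, hr⟩ := Prod.mk.injEq .. ▸ heq
        subst hx hy
        simp only [hl, hr]
        exact eqv_ctx p q (key u hcu)
    | refl x => exact Relation.EqvGen.refl _
    | symm x y _ ih => exact ih.symm _ _
    | trans x y z _ _ ih1 ih2 => exact ih1.trans _ _ _ ih2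
  · intro h
    refine Relation.EqvGen.mono ?_ _ _ h
    rintro u v ⟨p, q, l, r, hmem, hu, hv⟩
    exact ⟨p, q, l, r, Or.inl hmem, hu, hv⟩
end

section
/- Let A = {a,b,c}, R = {ac → ca, bc → cb, cab → cbb}, and R' = {c u a b → c u b b : u ∈ {a,b}*}. Then the (infinite) rewriting system (A, R ∪ R') is complete: it is terminating (there is no infinite sequence u₀ → u₁ → u₂ → ⋯ of single-step reductions) and confluent (whenever u →* v and u →* w there exists z with v →* z and w →* z). -/
open ABC

/-! ### Auxiliary definitions -/

deriving instance DecidableEq for ABC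

/-- c-weight of a letter. -/
def cw : ABC → ℕ
  | ABC.c => 1
  | _ => 0

/-- number of `c`'s. -/
def nc : List ABC → ℕ
  | [] => 0
  | x :: t => cw x + nc t

/-- letter weight for the termination measure. -/
def wt : ABC → ℕ
  | ABC.a => 2
  | ABC.b => 1
  | ABC.c => 0

/-- termination measure. -/
def F : List ABC → ℕ
  | [] => 0
  | x :: t => wt x * 2 ^ nc t + F t

/-- projection deleting all `c`'s. -/
def proj : List ABC → List ABC
  | [] => []
  | x :: t => if x = c then proj t else x :: proj t

/-- number of leading `a`'s. -/
def la : List ABC → ℕ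
  | [] => 0
  | x :: t => if x = a then la t + 1 else 0

/-- the normal form function. -/
def NF (u : List ABC) : List ABC :=
  if nc u = 0 then u
  else List.replicate (nc u) c ++
    (List.replicate ((proj u).length - la (proj u).reverse) b ++
      List.replicate (la (proj u).reverse) a)

@[simp] lemma cw_a : cw a = 0 := rfl
@[simp] lemma cw_b : cw b = 0 := rfl
@[simp] lemma cw_c : cw c = 1 := rfl
@[simp] lemma wt_a : wt a = 2 := rfl
@[simp] lemma wt_b : wt b = 1 := rfl
@[simp] lemma wt_c : wt c = 0 := rfl
@[simp] lemma nc_nil : nc [] = 0 := rfl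
@[simp] lemma nc_cons (x : ABC) (t : List ABC) : nc (x :: t) = cw x + nc t := rfl
@[simp] lemma F_nil : F [] = 0 := rfl
@[simp] lemma F_cons (x : ABC) (t : List ABC) : F (x :: t) = wt x * 2 ^ nc t + F t := rfl
@[simp] lemma proj_nil : proj [] = [] := rfl
@[simp] lemma proj_cons_a (t : List ABC) : proj (a :: t) = a :: proj t := rfl
@[simp] lemma proj_cons_b (t : List ABC) : proj (b :: t) = b :: proj t := rfl
@[simp] lemma proj_cons_c (t : List ABC) : proj (c :: t) = proj t := rfl
@[simp] lemma la_nil : la [] = 0 := rfl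
@[simp] lemma la_cons_a (t : List ABC) : la (a :: t) = la t + 1 := rfl
@[simp] lemma la_cons_b (t : List ABC) : la (b :: t) = 0 := rfl
@[simp] lemma la_cons_c (t : List ABC) : la (c :: t) = 0 := rfl

@[simp] lemma nc_append (u v : List ABC) : nc (u ++ v) = nc u + nc v := by
  induction u with
  | nil => simp
  | cons x t ih => simp [ih]; omega

@[simp] lemma proj_append (u v : List ABC) : proj (u ++ v) = proj u ++ proj v := by
  induction u with
  | nil => simp
  | cons x t ih => cases x <;> simp [ih]

lemma F_append (u v : List ABC) : F (u ++ v) = F u * 2 ^ nc v + F v := by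
  induction u with
  | nil => simp
  | cons x t ih => simp [ih, pow_add]; ring

lemma nc_zero_iff (w : List ABC) : nc w = 0 ↔ c ∉ w := by
  induction w with
  | nil => simp
  | cons x t ih => cases x <;> simp [ih]

lemma proj_of_nc_zero {w : List ABC} (h : nc w = 0) : proj w = w := by
  induction w with
  | nil => simp
  | cons x t ih =>
    cases x
    · simp at h ⊢; exact ih h
    · simp at h ⊢; exact ih h
    · simp at h

lemma nc_proj (u : List ABC) : nc (proj u) = 0 := by
  induction u with
  | nil => simp
  | cons x t ih => cases x <;> simp [ih]

/-! ### Termination -/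

lemma rule_facts {l r : List ABC} (h : (l, r) ∈ Rp ∪ Rp') : nc l = nc r ∧ F r < F l := by
  rcases h with h | h
  · simp only [Rp, Set.mem_insert_iff, Set.mem_singleton_iff] at h
    rcases h with h | h | h <;>
      · rw [Prod.ext_iff] at h
        obtain ⟨rfl, rfl⟩ := h
        refine ⟨by simp, by norm_num [F, nc, cw, wt]⟩
  · obtain ⟨w, hw, hp⟩ := h
    rw [Prod.ext_iff] at hp
    obtain ⟨rfl, rfl⟩ := hp
    have hw0 : nc w = 0 := (nc_zero_iff w).2 hw
    constructor
    · simp [hw0]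
    · simp [F_append, hw0, F, nc, cw, wt]

lemma step_F {u v : List ABC} (h : Step (Rp ∪ Rp') u v) : F v < F u := by
  obtain ⟨x, y, l, r, hm, rfl, rfl⟩ := h
  obtain ⟨h1, h2⟩ := rule_facts hm
  rw [F_append, F_append, F_append, F_append, h1]
  have hp : 0 < 2 ^ nc y := Nat.pow_pos (by norm_num)
  exact Nat.add_lt_add_right
    (Nat.mul_lt_mul_of_pos_right (Nat.add_lt_add_left h2 _) hp) _

/-! ### Step congruence lemmas -/

lemma step_mk {α : Type*} {R : Set (List α × List α)} {l r : List α}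
    (h : (l, r) ∈ R) (x y : List α) : Step R (x ++ l ++ y) (x ++ r ++ y) :=
  ⟨x, y, l, r, h, rfl, rfl⟩

lemma step_prepend {α : Type*} {R : Set (List α × List α)} (z : List α) {u v : List α}
    (h : Step R u v) : Step R (z ++ u) (z ++ v) := by
  obtain ⟨x, y, l, r, hm, rfl, rfl⟩ := h
  exact ⟨z ++ x, y, l, r, hm, by simp, by simp⟩

lemma rtg_prepend {α : Type*} {R : Set (List α × List α)} (z : List α) {u v : List α}
    (h : Relation.ReflTransGen (Step R) u v) :
    Relation.ReflTransGen (Step R) (z ++ u) (z ++ v) := by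
  induction h with
  | refl => exact .refl
  | tail _ h2 ih => exact ih.tail (step_prepend z h2)

lemma rtg_cons {α : Type*} {R : Set (List α × List α)} (z : α) {u v : List α}
    (h : Relation.ReflTransGen (Step R) u v) :
    Relation.ReflTransGen (Step R) (z :: u) (z :: v) := by
  simpa using rtg_prepend [z] h

/-! ### Reduction to the normal form -/

lemma mem_ac : (([a,c], [c,a]) : List ABC × List ABC) ∈ Rp ∪ Rp' := Or.inl (by simp [Rp])
lemma mem_bc : (([b,c], [c,b]) : List ABC × List ABC) ∈ Rp ∪ Rp' := Or.inl (by simp [Rp])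

lemma move_c (d : ABC) (hd : (([d, c], [c, d]) : List ABC × List ABC) ∈ Rp ∪ Rp') :
    ∀ (n : ℕ) (s : List ABC), Relation.ReflTransGen (Step (Rp ∪ Rp'))
      (d :: (List.replicate n c ++ s)) (List.replicate n c ++ d :: s) := by
  intro n
  induction n with
  | zero => intro s; exact Relation.ReflTransGen.refl
  | succ n ih =>
    intro s
    have h1 : Step (Rp ∪ Rp') (d :: (List.replicate (n+1) c ++ s))
        (c :: (d :: (List.replicate n c ++ s))) := by
      have := step_mk hd [] (List.replicate n c ++ s)
      simpa [List.replicate_succ] using this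
    have h2 := rtg_cons c (ih s)
    refine (Relation.ReflTransGen.single h1).trans ?_
    simpa [List.replicate_succ] using h2

lemma toFront (u : List ABC) :
    Relation.ReflTransGen (Step (Rp ∪ Rp')) u (List.replicate (nc u) c ++ proj u) := by
  induction u with
  | nil => exact Relation.ReflTransGen.refl
  | cons x t ih =>
    have h1 := rtg_cons x ih
    cases x with
    | c =>
      refine h1.trans ?_
      have h2 : nc (c :: t) = nc t + 1 := by simp; omega
      rw [h2]
      simp only [List.replicate_succ]
      exact Relation.ReflTransGen.refl
    | a =>
      refine h1.trans ?_
      have := move_c a mem_ac (nc t) (proj t)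
      simpa using this
    | b =>
      refine h1.trans ?_
      have := move_c b mem_bc (nc t) (proj t)
      simpa using this

lemma flatten : ∀ p : List ABC, nc p = 0 → ∃ m j : ℕ, ∀ w : List ABC, nc w = 0 →
    Relation.ReflTransGen (Step (Rp ∪ Rp'))
      (c :: (w ++ p)) (c :: (w ++ (List.replicate m b ++ List.replicate j a))) := by
  intro p
  induction p with
  | nil => exact fun _ => ⟨0, 0, fun w _ => by simpa using Relation.ReflTransGen.refl⟩
  | cons x t ih =>
    intro hx
    cases x with
    | c => simp at hx
    | b =>
      obtain ⟨m, j, H⟩ := ih (by simpa using hx)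
      refine ⟨m + 1, j, fun w hw => ?_⟩
      have := H (w ++ [b]) (by simp [hw])
      simpa [List.replicate_succ] using this
    | a =>
      obtain ⟨m, j, H⟩ := ih (by simpa using hx)
      cases m with
      | zero =>
        refine ⟨0, j + 1, fun w hw => ?_⟩
        have := H (w ++ [a]) (by simp [hw])
        simpa [List.replicate_succ] using this
      | succ m' =>
        refine ⟨m' + 2, j, fun w hw => ?_⟩
        have h1 := H (w ++ [a]) (by simp [hw])
        have hm : ((c :: w ++ [a, b], c :: w ++ [b, b]) : List ABC × List ABC) ∈ Rp ∪ Rp' :=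
          Or.inr ⟨w, (nc_zero_iff w).1 hw, rfl⟩
        have h2 := step_mk hm [] (List.replicate m' b ++ List.replicate j a)
        refine Relation.ReflTransGen.tail
          (b := c :: (w ++ a :: b :: (List.replicate m' b ++ List.replicate j a))) ?_ ?_
        · simpa [List.replicate_succ] using h1
        · simpa [List.replicate_succ] using h2

/-! ### NF is invariant under steps -/

lemma la_indep : ∀ (s t t' : List ABC), la (s ++ b :: t) = la (s ++ b :: t') := by
  intro s
  induction s with
  | nil => intro t t'; simp
  | cons x s ih => intro t t'; cases x <;> simp [ih t t']

lemma NF_core {u v : List ABC} (h1 : nc u = nc v) (h2 : (proj u).length = (proj v).length)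
    (h3 : la (proj u).reverse = la (proj v).reverse) (h0 : nc u ≠ 0) : NF u = NF v := by
  unfold NF
  rw [if_neg h0, if_neg (h1 ▸ h0), h1, h2, h3]

lemma NF_ac (x y : List ABC) : NF (x ++ [a, c] ++ y) = NF (x ++ [c, a] ++ y) := by
  have hp : proj (x ++ [a, c] ++ y) = proj (x ++ [c, a] ++ y) := by simp
  refine NF_core (by simp) (by rw [hp]) (by rw [hp]) (by simp)

lemma NF_bc (x y : List ABC) : NF (x ++ [b, c] ++ y) = NF (x ++ [c, b] ++ y) := by
  have hp : proj (x ++ [b, c] ++ y) = proj (x ++ [c, b] ++ y) := by simp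
  refine NF_core (by simp) (by rw [hp]) (by rw [hp]) (by simp)

lemma NF_ab (x y w : List ABC) (hw : nc w = 0) :
    NF (x ++ (c :: w ++ [a, b]) ++ y) = NF (x ++ (c :: w ++ [b, b]) ++ y) := by
  refine NF_core ?_ ?_ ?_ ?_
  · simp [hw]
  · simp [proj_of_nc_zero hw]
  · simp only [proj_append, proj_cons_c, proj_cons_a, proj_cons_b, proj_of_nc_zero hw,
      List.append_assoc, List.cons_append, List.nil_append,
      List.reverse_append, List.reverse_cons]
    exact la_indep _ _ _
  · simp [hw]

lemma NF_step {u v : List ABC} (h : Step (Rp ∪ Rp') u v) : NF u = NF v := by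
  obtain ⟨x, y, l, r, hm, rfl, rfl⟩ := h
  rcases hm with hm | hm
  · simp only [Rp, Set.mem_insert_iff, Set.mem_singleton_iff] at hm
    rcases hm with hm | hm | hm
    all_goals (rw [Prod.ext_iff] at hm; obtain ⟨rfl, rfl⟩ := hm)
    · exact NF_ac x y
    · exact NF_bc x y
    · have h := NF_ab x y [] (by simp)
      simpa using h
  · obtain ⟨w, hw, hp⟩ := hm
    rw [Prod.ext_iff] at hp
    obtain ⟨rfl, rfl⟩ := hp
    exact NF_ab x y w ((nc_zero_iff w).2 hw)

lemma NF_rtg {u v : List ABC} (h : Relation.ReflTransGen (Step (Rp ∪ Rp')) u v) :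
    NF u = NF v := by
  induction h with
  | refl => rfl
  | tail _ h2 ih => exact ih.trans (NF_step h2)

/-! ### NF is a fixed point on canonical words -/

lemma nc_replicate_c (n : ℕ) : nc (List.replicate n c) = n := by
  induction n with
  | zero => simp
  | succ n ih => simp [List.replicate_succ, ih]; omega

lemma nc_replicate_b (n : ℕ) : nc (List.replicate n b) = 0 := by
  induction n with
  | zero => simp
  | succ n ih => simp [List.replicate_succ, ih]

lemma nc_replicate_a (n : ℕ) : nc (List.replicate n a) = 0 := by
  induction n with
  | zero => simp
  | succ n ih => simp [List.replicate_succ, ih]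

lemma proj_replicate_c (n : ℕ) : proj (List.replicate n c) = [] := by
  induction n with
  | zero => simp
  | succ n ih => simp [List.replicate_succ, ih]

lemma la_replicate_a_append (j : ℕ) (s : List ABC) :
    la (List.replicate j a ++ s) = j + la s := by
  induction j with
  | zero => simp
  | succ j ih => simp [List.replicate_succ, ih]; omega

lemma la_replicate_b (m : ℕ) : la (List.replicate m b) = 0 := by
  cases m <;> simp [List.replicate_succ]

lemma NF_canon (k m j : ℕ) :
    NF (List.replicate (k + 1) c ++ (List.replicate m b ++ List.replicate j a)) =
      List.replicate (k + 1) c ++ (List.replicate m b ++ List.replicate j a) := by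
  have hnc : nc (List.replicate (k + 1) c ++ (List.replicate m b ++ List.replicate j a))
      = k + 1 := by
    simp [nc_replicate_c, nc_replicate_b, nc_replicate_a]
  have hproj : proj (List.replicate (k + 1) c ++ (List.replicate m b ++ List.replicate j a))
      = List.replicate m b ++ List.replicate j a := by
    simp [proj_replicate_c, proj_of_nc_zero (nc_replicate_b m),
      proj_of_nc_zero (nc_replicate_a j)]
  have hla : la (List.replicate m b ++ List.replicate j a).reverse = j := by
    simp [List.reverse_append, List.reverse_replicate, la_replicate_a_append,
      la_replicate_b]
  unfold NF
  rw [hnc, hproj, hla, if_neg (Nat.succ_ne_zero k)]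
  have hlen : (List.replicate m b ++ List.replicate j a).length - j = m := by simp
  rw [hlen]

/-! ### Every word reduces to its normal form -/

lemma to_NF (u : List ABC) : Relation.ReflTransGen (Step (Rp ∪ Rp')) u (NF u) := by
  by_cases h : nc u = 0
  · unfold NF
    rw [if_pos h]
  · obtain ⟨k, hk⟩ : ∃ k, nc u = k + 1 := ⟨nc u - 1, by omega⟩
    obtain ⟨m, j, H⟩ := flatten (proj u) (nc_proj u)
    have h2 := H [] (by simp)
    have h3 := rtg_prepend (List.replicate k c) h2
    have h4 : Relation.ReflTransGen (Step (Rp ∪ Rp')) u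
        (List.replicate (k + 1) c ++ (List.replicate m b ++ List.replicate j a)) := by
      refine (toFront u).trans ?_
      rw [hk]
      simpa [List.replicate_succ'] using h3
    have h5 : NF u = List.replicate (k + 1) c ++ (List.replicate m b ++ List.replicate j a) :=
      (NF_rtg h4).trans (NF_canon k m j)
    rw [h5]
    exact h4

/-- The infinite rewriting system `R ∪ R'` is complete: terminating and
confluent. -/
theorem stmt_8 :
    (¬ ∃ f : ℕ → List ABC, ∀ n : ℕ, Step (Rp ∪ Rp') (f n) (f (n + 1))) ∧
    (∀ u v w : List ABC, Relation.ReflTransGen (Step (Rp ∪ Rp')) u v →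
      Relation.ReflTransGen (Step (Rp ∪ Rp')) u w →
      ∃ z : List ABC, Relation.ReflTransGen (Step (Rp ∪ Rp')) v z ∧
        Relation.ReflTransGen (Step (Rp ∪ Rp')) w z) := by
  constructor
  · rintro ⟨f, hf⟩
    have h : ∀ n, F (f (n + 1)) < F (f n) := fun n => step_F (hf n)
    have h2 : ∀ n, F (f n) + n ≤ F (f 0) := by
      intro n
      induction n with
      | zero => simp
      | succ n ih => have := h n; omega
    have := h2 (F (f 0) + 1)
    omega
  · intro u v w huv huw
    refine ⟨NF u, ?_, ?_⟩
    · rw [NF_rtg huv] at *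
      exact to_NF v
    · rw [NF_rtg huw] at *
      exact to_NF w
end
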